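/- Let V, P be finite-dimensional real inner product spaces, K_Ω, K_Γ symmetric positive semidefinite, B : V → P linear, ε, δ, κ, σ, τ > 0, and W₊, W₋, G₊, G₋ convex differentiable potentials. Suppose uⁿ, uⁿ⁺¹, wⁿ⁺¹ ∈ V and pⁿ, pⁿ⁺¹, rⁿ⁺¹, λⁿ⁺¹, μⁿ⁺¹ ∈ P satisfy the Goldstein–Miranville–Schimpera scheme: (i) uⁿ⁺¹ + τσ K_Ω wⁿ⁺¹ − τ B*μⁿ⁺¹ = uⁿ; (ii) ε K_Ω uⁿ⁺¹ + ε⁻¹(∇W₊(uⁿ⁺¹) − ∇W₋(uⁿ)) − ε B*λⁿ⁺¹ = wⁿ⁺¹; (iii) pⁿ⁺¹ + τ K_Γ rⁿ⁺¹ + τ μⁿ⁺¹ = pⁿ; (iv) δκ K_Γ pⁿ⁺¹ + δ⁻¹(∇G₊(pⁿ⁺¹) − ∇G₋(pⁿ)) + ε λⁿ⁺¹ = rⁿ⁺¹; (v) B uⁿ = pⁿ, B uⁿ⁺¹ = pⁿ⁺¹, and B wⁿ⁺¹ = rⁿ⁺¹. Then E(uⁿ⁺¹, pⁿ⁺¹)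 ≤ E(uⁿ, pⁿ) where E(u,p) = (ε/2)⟨K_Ω u,u⟩ + ε⁻¹(W₊(u)−W₋(u)) + (δκ/2)⟨K_Γ p,p⟩ + δ⁻¹(G₊(p)−G₋(p)). -/

import Mathlib

open scoped RealInnerProductSpace
set_option maxHeartbeats 1000000

lemma grad_ineq' {V : Type*} [NormedAddCommGroup V] [InnerProductSpace ℝ V] [CompleteSpace V]
    {f : V → ℝ} {g : V} {x : V} (hconv : ConvexOn ℝ Set.univ f)
    (hg : HasGradientAt f g x) (y : V) :
    ⟪g, y - x⟫ ≤ f y - f x := by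
  set φ : ℝ → ℝ := fun t => f (AffineMap.lineMap x y t) with hφ
  have hφconv : ConvexOn ℝ Set.univ φ := by
    have h := hconv.comp_affineMap (AffineMap.lineMap x y)
    rw [Set.preimage_univ] at h
    exact h
  have hline : HasDerivAt (fun t : ℝ => AffineMap.lineMap x y t) (y - x) 0 := by
    have heq : (fun t : ℝ => AffineMap.lineMap x y t) = fun t : ℝ => t • (y - x) + x := by
      funext t; simp [AffineMap.lineMap_apply_module]; module
    rw [heq]
    simpa using ((hasDerivAt_id (0:ℝ)).smul_const (y - x)).add_const x
  have hF : HasFDerivAt f (InnerProductSpace.toDual ℝ V g) x := hg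
  have hD : HasDerivAt φ ⟪g, y - x⟫ 0 := by
    have hF0 : HasFDerivAt f (InnerProductSpace.toDual ℝ V g) ((AffineMap.lineMap x y) (0:ℝ)) := by
      simpa using hF
    have := hF0.comp_hasDerivAt (0:ℝ) hline
    exact this
  have := hφconv.le_slope_of_hasDerivAt (Set.mem_univ 0) (Set.mem_univ 1) one_pos hD
  simpa [slope, φ] using this

theorem stmt_15 {V P : Type*} [NormedAddCommGroup V] [InnerProductSpace ℝ V]
    [FiniteDimensional ℝ V] [NormedAddCommGroup P] [InnerProductSpace ℝ P]
    [FiniteDimensional ℝ P]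
    (KΩ : V →ₗ[ℝ] V) (KΓ : P →ₗ[ℝ] P) (B : V →ₗ[ℝ] P)
    (hKΩsym : ∀ x y : V, ⟪KΩ x, y⟫ = ⟪x, KΩ y⟫)
    (hKΩpos : ∀ v : V, 0 ≤ ⟪KΩ v, v⟫)
    (hKΓsym : ∀ x y : P, ⟪KΓ x, y⟫ = ⟪x, KΓ y⟫)
    (hKΓpos : ∀ q : P, 0 ≤ ⟪KΓ q, q⟫)
    (ε δ κ σ τ : ℝ) (hε : 0 < ε) (hδ : 0 < δ) (hκ : 0 < κ) (hσ : 0 < σ) (hτ : 0 < τ)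
    (Wp Wm : V → ℝ) (gWp gWm : V → V)
    (Gp Gm : P → ℝ) (gGp gGm : P → P)
    (hWpconv : ConvexOn ℝ Set.univ Wp) (hWmconv : ConvexOn ℝ Set.univ Wm)
    (hGpconv : ConvexOn ℝ Set.univ Gp) (hGmconv : ConvexOn ℝ Set.univ Gm)
    (hWp : ∀ x, HasGradientAt Wp (gWp x) x)
    (hWm : ∀ x, HasGradientAt Wm (gWm x) x)
    (hGp : ∀ x, HasGradientAt Gp (gGp x) x)
    (hGm : ∀ x, HasGradientAt Gm (gGm x) x)
    (E : V → P → ℝ)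
    (hE : ∀ u p, E u p = (ε/2) * ⟪KΩ u, u⟫ + ε⁻¹ * (Wp u - Wm u)
      + (δ * κ / 2) * ⟪KΓ p, p⟫ + δ⁻¹ * (Gp p - Gm p))
    (u0 u1 w1 : V) (p0 p1 r1 lam mu : P)
    (h1 : u1 + (τ * σ) • KΩ w1 - τ • (LinearMap.adjoint B) mu = u0)
    (h2 : ε • KΩ u1 + ε⁻¹ • (gWp u1 - gWm u0) - ε • (LinearMap.adjoint B) lam = w1)
    (h3 : p1 + τ • KΓ r1 + τ • mu = p0)
    (h4 : (δ * κ) • KΓ p1 + δ⁻¹ • (gGp p1 - gGm p0) + ε • lam = r1)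
    (h5 : B u0 = p0) (h6 : B u1 = p1) (h7 : B w1 = r1) :
    E u1 p1 ≤ E u0 p0 := by
  have hu : u1 - u0 = τ • (LinearMap.adjoint B) mu - (τ * σ) • KΩ w1 := by
    rw [← h1]; abel
  have hp : p1 - p0 = -(τ • KΓ r1) - τ • mu := by
    rw [← h3]; abel
  -- gradient inequalities
  have gW1 : Wp u1 - Wp u0 ≤ ⟪gWp u1, u1 - u0⟫ := by
    have h := grad_ineq' hWpconv (hWp u1) u0
    rw [show u0 - u1 = -(u1 - u0) by abel, inner_neg_right] at h
    linarith
  have gW2 : ⟪gWm u0, u1 - u0⟫ ≤ Wm u1 - Wm u0 := grad_ineq' hWmconv (hWm u0) u1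
  have gG1 : Gp p1 - Gp p0 ≤ ⟪gGp p1, p1 - p0⟫ := by
    have h := grad_ineq' hGpconv (hGp p1) p0
    rw [show p0 - p1 = -(p1 - p0) by abel, inner_neg_right] at h
    linarith
  have gG2 : ⟪gGm p0, p1 - p0⟫ ≤ Gm p1 - Gm p0 := grad_ineq' hGmconv (hGm p0) p1
  -- quadratic inequalities
  have quadΩ : ⟪KΩ u1, u1⟫ - ⟪KΩ u0, u0⟫ ≤ 2 * ⟪KΩ u1, u1 - u0⟫ := by
    have h := hKΩpos (u1 - u0)
    have hsym : ⟪KΩ u0, u1⟫ = ⟪KΩ u1, u0⟫ := by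
      rw [hKΩsym u0 u1, real_inner_comm]
    simp only [map_sub, inner_sub_left, inner_sub_right] at h ⊢
    linarith
  have quadΓ : ⟪KΓ p1, p1⟫ - ⟪KΓ p0, p0⟫ ≤ 2 * ⟪KΓ p1, p1 - p0⟫ := by
    have h := hKΓpos (p1 - p0)
    have hsym : ⟪KΓ p0, p1⟫ = ⟪KΓ p1, p0⟫ := by
      rw [hKΓsym p0 p1, real_inner_comm]
    simp only [map_sub, inner_sub_left, inner_sub_right] at h ⊢
    linarith
  -- identities from the scheme
  have e1 : ⟪w1, u1 - u0⟫ = τ * ⟪r1, mu⟫ - (τ * σ) * ⟪KΩ w1, w1⟫ := by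
    rw [hu, inner_sub_right, real_inner_smul_right, real_inner_smul_right,
      LinearMap.adjoint_inner_right, h7, real_inner_comm w1 (KΩ w1)]
  have e2 : ⟪(LinearMap.adjoint B) lam, u1 - u0⟫ = ⟪lam, p1 - p0⟫ := by
    rw [LinearMap.adjoint_inner_left, map_sub, h5, h6]
  have e3 : ⟪r1, p1 - p0⟫ = -(τ * ⟪KΓ r1, r1⟫) - τ * ⟪r1, mu⟫ := by
    rw [hp, inner_sub_right, inner_neg_right, real_inner_smul_right,
      real_inner_smul_right, real_inner_comm r1 (KΓ r1)]
  have e4 : ⟪w1, u1 - u0⟫ + ε * ⟪(LinearMap.adjoint B) lam, u1 - u0⟫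
      = ε * ⟪KΩ u1, u1 - u0⟫ + ε⁻¹ * (⟪gWp u1, u1 - u0⟫ - ⟪gWm u0, u1 - u0⟫) := by
    have hw : w1 + ε • (LinearMap.adjoint B) lam
        = ε • KΩ u1 + ε⁻¹ • (gWp u1 - gWm u0) := by rw [← h2]; abel
    have := congrArg (fun v => ⟪v, u1 - u0⟫) hw
    simpa [inner_add_left, inner_sub_left, real_inner_smul_left, mul_sub] using this
  have e5 : ⟪r1, p1 - p0⟫ - ε * ⟪lam, p1 - p0⟫
      = (δ * κ) * ⟪KΓ p1, p1 - p0⟫ + δ⁻¹ * (⟪gGp p1, p1 - p0⟫ - ⟪gGm p0, p1 - p0⟫) := by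
    have hr : r1 - ε • lam
        = (δ * κ) • KΓ p1 + δ⁻¹ • (gGp p1 - gGm p0) := by rw [← h4]; abel
    have := congrArg (fun v => ⟪v, p1 - p0⟫) hr
    simpa [inner_add_left, inner_sub_left, real_inner_smul_left, mul_sub] using this
  -- assemble
  have hAC : ε * ⟪KΩ u1, u1 - u0⟫ + ε⁻¹ * (⟪gWp u1, u1 - u0⟫ - ⟪gWm u0, u1 - u0⟫)
      + ((δ * κ) * ⟪KΓ p1, p1 - p0⟫ + δ⁻¹ * (⟪gGp p1, p1 - p0⟫ - ⟪gGm p0, p1 - p0⟫))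
      = -((τ * σ) * ⟪KΩ w1, w1⟫) - τ * ⟪KΓ r1, r1⟫ := by
    rw [← e4, ← e5, e1, e2, e3]; ring
  have hq1 : (ε / 2) * (⟪KΩ u1, u1⟫ - ⟪KΩ u0, u0⟫) ≤ ε * ⟪KΩ u1, u1 - u0⟫ := by
    nlinarith [quadΩ, hε.le]
  have hq2 : (δ * κ / 2) * (⟪KΓ p1, p1⟫ - ⟪KΓ p0, p0⟫) ≤ (δ * κ) * ⟪KΓ p1, p1 - p0⟫ := by
    nlinarith [quadΓ, mul_pos hδ hκ]
  have hw' : ε⁻¹ * ((Wp u1 - Wp u0) - (Wm u1 - Wm u0))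
      ≤ ε⁻¹ * (⟪gWp u1, u1 - u0⟫ - ⟪gWm u0, u1 - u0⟫) :=
    mul_le_mul_of_nonneg_left (by linarith) (inv_nonneg.mpr hε.le)
  have hg' : δ⁻¹ * ((Gp p1 - Gp p0) - (Gm p1 - Gm p0))
      ≤ δ⁻¹ * (⟪gGp p1, p1 - p0⟫ - ⟪gGm p0, p1 - p0⟫) :=
    mul_le_mul_of_nonneg_left (by linarith) (inv_nonneg.mpr hδ.le)
  have hn1 : 0 ≤ (τ * σ) * ⟪KΩ w1, w1⟫ := mul_nonneg (mul_pos hτ hσ).le (hKΩpos w1)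
  have hn2 : 0 ≤ τ * ⟪KΓ r1, r1⟫ := mul_nonneg hτ.le (hKΓpos r1)
  rw [hE, hE]
  linarith [hq1, hq2, hw', hg', hAC, hn1, hn2]
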